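/- Let F be a finite field and let r ≤ u be positive integers. There exists a totally nonsingular matrix A ∈ F^{r×u} (all of whose entries are nonzero) if and only if there exists an r × (r + u) MDS matrix over F. -/

import Mathlib

/-- A matrix is totally nonsingular if every square submatrix (given by injections
selecting rows and columns) is nonsingular. -/
def IsTotallyNonsingular {F : Type*} [Field F] {r u : ℕ}
    (A : Matrix (Fin r) (Fin u) F) : Prop :=
  ∀ (k : ℕ), 1 ≤ k → ∀ (ρ : Fin k → Fin r) (σ : Fin k → Fin u),
    Function.Injective ρ → Function.Injective σ →
      (Matrix.of fun p q : Fin k => A (ρ p) (σ q)).det ≠ 0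

/-- A matrix G with r rows (and columns indexed by an arbitrary type) is MDS if every
r × r submatrix formed by selecting any r distinct columns is nonsingular. -/
def IsMDS {F : Type*} [Field F] {r : ℕ} {n : Type*}
    (G : Matrix (Fin r) n F) : Prop :=
  ∀ σ : Fin r → n, Function.Injective σ →
    (Matrix.of fun p q : Fin r => G p (σ q)).det ≠ 0

open Matrix in
lemma det_submatrix_equiv_ne_zero_iff {F : Type*} [Field F] {n m : Type*}
    [DecidableEq n] [Fintype n] [DecidableEq m] [Fintype m]
    (M : Matrix m m F) (e f : n ≃ m) :
    (M.submatrix e f).det ≠ 0 ↔ M.det ≠ 0 := by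
  have h : M.submatrix e f = (M.submatrix f f).submatrix (e.trans f.symm : n ≃ n) id := by
    ext i j
    simp [Matrix.submatrix_apply]
  have hdet : (M.submatrix e f).det
      = ((Equiv.Perm.sign (e.trans f.symm : n ≃ n) : ℤ) : F) * M.det := by
    rw [h]
    rw [Matrix.det_permute (e.trans f.symm : n ≃ n) (M.submatrix f f)]
    rw [Matrix.det_submatrix_equiv_self]
  rw [hdet]
  rcases Int.units_eq_one_or (Equiv.Perm.sign (e.trans f.symm : n ≃ n)) with hs | hs <;>
    simp [hs]

open Matrix in
lemma key_lemma {F : Type*} [Field F] {r u : ℕ} (A : Matrix (Fin r) (Fin u) F)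
    {γ δ : Type*} [Fintype γ] [Fintype δ] [DecidableEq γ] [DecidableEq δ]
    (s : γ → Fin r) (c : δ → Fin r) (t : δ → Fin u)
    (he : Function.Bijective (Sum.elim s c)) (f : Fin r ≃ γ ⊕ δ) :
    (Matrix.of fun p q : Fin r =>
        (Matrix.fromCols (1 : Matrix (Fin r) (Fin r) F) A) p (Sum.map s t (f q))).det ≠ 0 ↔
      (A.submatrix c t).det ≠ 0 := by
  have hs : Function.Injective s := by
    intro a b h
    have := he.1 (show Sum.elim s c (Sum.inl a) = Sum.elim s c (Sum.inl b) by simpa using h)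
    simpa using this
  have hdisj : ∀ p q, c p ≠ s q := by
    intro p q h
    have := he.1 (show Sum.elim s c (Sum.inr p) = Sum.elim s c (Sum.inl q) by simpa using h)
    simp at this
  set E : γ ⊕ δ ≃ Fin r := Equiv.ofBijective _ he with hE
  set N : Matrix (γ ⊕ δ) (γ ⊕ δ) F :=
    Matrix.fromBlocks 1 (A.submatrix s t) 0 (A.submatrix c t) with hN
  have hNval : ∀ x y, N x y =
      (Matrix.fromCols (1 : Matrix (Fin r) (Fin r) F) A) (E x) (Sum.map s t y) := by
    rintro (p | p) (q | q)
    · have hEx : E (Sum.inl p) = s p := rfl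
      simp only [hN, Matrix.fromBlocks_apply₁₁, Sum.map_inl, hEx,
        Matrix.fromCols_apply_inl, Matrix.one_apply]
      by_cases hpq : p = q
      · simp [hpq]
      · rw [if_neg hpq, if_neg (fun h => hpq (hs h))]
    · have hEx : E (Sum.inl p) = s p := rfl
      simp [hN, hEx]
    · have hEx : E (Sum.inr p) = c p := rfl
      simp [hN, hEx, Matrix.one_apply, hdisj p q]
    · have hEx : E (Sum.inr p) = c p := rfl
      simp [hN, hEx]
  have hM : (Matrix.of fun p q : Fin r =>
      (Matrix.fromCols (1 : Matrix (Fin r) (Fin r) F) A) p (Sum.map s t (f q)))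
      = N.submatrix E.symm f := by
    ext p q
    simp [Matrix.submatrix_apply, hNval]
  rw [hM, det_submatrix_equiv_ne_zero_iff N E.symm f, hN,
    Matrix.det_fromBlocks_zero₂₁, Matrix.det_one, one_mul]

lemma tns_submatrix {F : Type*} [Field F] {r u : ℕ} {A : Matrix (Fin r) (Fin u) F}
    (hA : IsTotallyNonsingular A) {δ : Type*} [Fintype δ] [DecidableEq δ]
    (c : δ → Fin r) (t : δ → Fin u) (hc : Function.Injective c)
    (ht : Function.Injective t) : (A.submatrix c t).det ≠ 0 := by
  rcases Nat.eq_zero_or_pos (Fintype.card δ) with h0 | h0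
  · haveI : IsEmpty δ := Fintype.card_eq_zero_iff.mp h0
    simp [Matrix.det_isEmpty]
  · set e : Fin (Fintype.card δ) ≃ δ := (Fintype.equivFin δ).symm with he
    have : A.submatrix c t = (Matrix.of fun p q : Fin (Fintype.card δ) =>
        A (c (e p)) (t (e q))).submatrix e.symm e.symm := by
      ext i j
      simp
    rw [this, Matrix.det_submatrix_equiv_self]
    exact hA (Fintype.card δ) h0 (c ∘ e) (t ∘ e)
      (hc.comp e.injective) (ht.comp e.injective)


/-- Let F be a finite field and r ≤ u positive integers.  There exists a
totally nonsingular matrix A ∈ F^{r×u} (all of whose entries are nonzero) if and only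
if there exists an r × (r + u) MDS matrix over F. -/
theorem stmt_10 {F : Type*} [Field F] [Fintype F] {r u : ℕ}
    (hr : 0 < r) (hu : 0 < u) (hru : r ≤ u) :
    (∃ A : Matrix (Fin r) (Fin u) F,
        IsTotallyNonsingular A ∧ ∀ i k, A i k ≠ 0) ↔
    (∃ G : Matrix (Fin r) (Fin (r + u)) F, IsMDS G) := by
  constructor
  · rintro ⟨A, hA, -⟩
    refine ⟨(Matrix.fromCols (1 : Matrix (Fin r) (Fin r) F) A).submatrix id
      finSumFinEquiv.symm, ?_⟩
    intro τ hτ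
    set τ' : Fin r → Fin r ⊕ Fin u := fun i => finSumFinEquiv.symm (τ i) with hτ'def
    have hτ' : Function.Injective τ' := finSumFinEquiv.symm.injective.comp hτ
    classical
    set p : Fin r → Prop := fun i => (τ' i).isLeft = true with hp
    set γ := { i // p i }
    set δ := { i // ¬ p i }
    set s : γ → Fin r := fun i => (τ' i.1).getLeft i.2 with hsdef
    set t : δ → Fin u := fun i =>
      (τ' i.1).getRight (Sum.not_isLeft.mp i.2) with htdef
    have hs : Function.Injective s := by
      intro a b h
      have ha := Sum.inl_getLeft (τ' a.1) a.2
      have hb := Sum.inl_getLeft (τ' b.1) b.2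
      have : τ' a.1 = τ' b.1 := by rw [← ha, ← hb]; exact congrArg Sum.inl h
      exact Subtype.ext (hτ' this)
    have ht : Function.Injective t := by
      intro a b h
      have ha := Sum.inr_getRight (τ' a.1) (Sum.not_isLeft.mp a.2)
      have hb := Sum.inr_getRight (τ' b.1) (Sum.not_isLeft.mp b.2)
      have : τ' a.1 = τ' b.1 := by rw [← ha, ← hb]; exact congrArg Sum.inr h
      exact Subtype.ext (hτ' this)
    -- cardinalities
    have hcards : Fintype.card γ + Fintype.card δ = r := by
      have := Fintype.card_congr (Equiv.sumCompl p)
      rw [Fintype.card_sum, Fintype.card_fin] at this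
      exact this
    have hcardγ : Fintype.card ↥(Set.range s) = Fintype.card γ :=
      Set.card_range_of_injective hs
    have hcardc : Fintype.card δ = Fintype.card ↥(Set.range s)ᶜ := by
      rw [Fintype.card_compl_set, hcardγ, Fintype.card_fin]
      omega
    set e2 : δ ≃ ↥(Set.range s)ᶜ := Fintype.equivOfCardEq hcardc with he2
    set c : δ → Fin r := fun i => (e2 i).1 with hcdef
    have hc : Function.Injective c :=
      Subtype.val_injective.comp e2.injective
    have hcr : ∀ i, c i ∉ Set.range s := fun i => (e2 i).2
    have he : Function.Bijective (Sum.elim s c) := by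
      rw [Fintype.bijective_iff_injective_and_card]
      constructor
      · rintro (a | a) (b | b) h
        · simp only [Sum.elim_inl] at h; rw [hs h]
        · simp only [Sum.elim_inl, Sum.elim_inr] at h
          exact absurd (⟨a, h⟩ : c b ∈ Set.range s) (hcr b)
        · simp only [Sum.elim_inl, Sum.elim_inr] at h
          exact absurd (⟨b, h.symm⟩ : c a ∈ Set.range s) (hcr a)
        · simp only [Sum.elim_inr] at h; rw [hc h]
      · simp [Fintype.card_sum, hcards]
    set f : Fin r ≃ γ ⊕ δ := (Equiv.sumCompl p).symm with hf
    have hmap : ∀ i, τ' i = Sum.map s t (f i) := by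
      intro i
      by_cases hi : p i
      · rw [hf, Equiv.sumCompl_symm_apply_of_pos (p := p) hi]
        simp only [Sum.map_inl]
        exact (Sum.inl_getLeft (τ' i) hi).symm
      · rw [hf, Equiv.sumCompl_symm_apply_of_neg (p := p) hi]
        simp only [Sum.map_inr]
        exact (Sum.inr_getRight (τ' i) (Sum.not_isLeft.mp hi)).symm
    have hgoal : (Matrix.of fun pp q : Fin r =>
        ((Matrix.fromCols (1 : Matrix (Fin r) (Fin r) F) A).submatrix id
          finSumFinEquiv.symm) pp (τ q))
        = Matrix.of fun pp q : Fin r =>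
          (Matrix.fromCols (1 : Matrix (Fin r) (Fin r) F) A) pp (Sum.map s t (f q)) := by
      ext i j
      simp [Matrix.submatrix_apply, ← hmap j, hτ'def]
    rw [hgoal]
    exact (key_lemma A s c t he f).mpr (tns_submatrix hA c t hc ht)
  · rintro ⟨G, hG⟩
    classical
    set GS : Matrix (Fin r) (Fin r ⊕ Fin u) F := G.submatrix id finSumFinEquiv with hGS
    set B : Matrix (Fin r) (Fin r) F := GS.submatrix id Sum.inl with hB
    set C : Matrix (Fin r) (Fin u) F := GS.submatrix id Sum.inr with hC
    have hBdet : B.det ≠ 0 := by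
      have := hG (fun q => finSumFinEquiv (Sum.inl q))
        (finSumFinEquiv.injective.comp Sum.inl_injective)
      convert this using 2
      rfl
    set A : Matrix (Fin r) (Fin u) F := B⁻¹ * C with hA
    have hfromCols : Matrix.fromCols (1 : Matrix (Fin r) (Fin r) F) A = B⁻¹ * GS := by
      ext i j
      rcases j with j | j
      · have : (B⁻¹ * GS) i (Sum.inl j) = (B⁻¹ * B) i j := by
          simp only [Matrix.mul_apply]
          rfl
        rw [Matrix.fromCols_apply_inl, this,
          Matrix.nonsing_inv_mul B (isUnit_iff_ne_zero.mpr hBdet)]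
      · have : (B⁻¹ * GS) i (Sum.inr j) = (B⁻¹ * C) i j := by
          simp only [Matrix.mul_apply]
          rfl
        rw [Matrix.fromCols_apply_inr, hA, this]
    have hTNS : IsTotallyNonsingular A := by
      intro k hk ρ σ hρ hσ
      have hkr : k ≤ r := by
        have := Fintype.card_le_of_injective ρ hρ
        simpa using this
      set γ := ↥(Set.range ρ)ᶜ
      set s : γ → Fin r := Subtype.val with hsdef
      have hs : Function.Injective s := Subtype.val_injective
      have he : Function.Bijective (Sum.elim s ρ) := by
        rw [Fintype.bijective_iff_injective_and_card]
        constructor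
        · rintro (a | a) (b | b) h
          · simp only [Sum.elim_inl] at h; rw [Subtype.ext h]
          · simp only [Sum.elim_inl, Sum.elim_inr] at h
            exact absurd (⟨b, h.symm⟩ : (a : Fin r) ∈ Set.range ρ) a.2
          · simp only [Sum.elim_inl, Sum.elim_inr] at h
            exact absurd (⟨a, h⟩ : (b : Fin r) ∈ Set.range ρ) b.2
          · simp only [Sum.elim_inr] at h; rw [hρ h]
        · rw [Fintype.card_sum, Fintype.card_compl_set,
            Set.card_range_of_injective hρ]
          simp
          omega
      set f : Fin r ≃ γ ⊕ Fin k := (Equiv.ofBijective _ he).symm with hf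
      have hkey := key_lemma A s ρ σ he f
      have hMDS : (Matrix.of fun p q : Fin r =>
          (Matrix.fromCols (1 : Matrix (Fin r) (Fin r) F) A) p
            (Sum.map s σ (f q))).det ≠ 0 := by
        set col : Fin r → Fin (r + u) := fun q => finSumFinEquiv (Sum.map s σ (f q)) with hcol
        have hcolinj : Function.Injective col :=
          finSumFinEquiv.injective.comp ((hs.sumMap hσ).comp f.injective)
        have hN := hG col hcolinj
        have hprod : (Matrix.of fun p q : Fin r =>
            (Matrix.fromCols (1 : Matrix (Fin r) (Fin r) F) A) p (Sum.map s σ (f q)))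
            = B⁻¹ * (Matrix.of fun p q : Fin r => G p (col q)) := by
          ext i j
          rw [Matrix.of_apply, hfromCols]
          simp only [Matrix.mul_apply]
          rfl
        rw [hprod, Matrix.det_mul]
        refine mul_ne_zero ?_ hN
        rw [Matrix.det_nonsing_inv]
        simpa [Ring.inverse_eq_inv'] using inv_ne_zero hBdet
      exact hkey.mp hMDS
    refine ⟨A, hTNS, ?_⟩
    intro i k
    intro h0
    have := hTNS 1 le_rfl (fun _ => i) (fun _ => k)
      (fun a b _ => Subsingleton.elim a b) (fun a b _ => Subsingleton.elim a b)
    apply this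
    rw [Matrix.det_fin_one]
    simpa using h0
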